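/- Let H be an n_r×n_t complex matrix with n_r < n_t and rank(H) = n_r, let G = H*H, let W be an n_t×n_t unitary matrix, let A = W*GW, and let P = P(A). Let i_1, …, i_{n_t} be an ordering of the indices {1,…,n_t} such that the diagonal entries satisfy A_{i_1,i_1} ≤ A_{i_2,i_2} ≤ … ≤ A_{i_{n_t},i_{n_t}}. Then for every q with 1 ≤ q ≤ n_t − n_r, the interference power of the q-th best precoding column satisfies ‖H·(W e_{i_q})‖² ≤ √2·P, where ‖·‖ is the Euclidean norm and e_i is the i-th standard basis vector. -/

import Mathlib

open Matrix Real Complex Finset Filter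

noncomputable section

/-- The `n × n` complex plane-rotation matrix `R_{l,m}(θ,φ)`: equal to the identity except
that its `(l,l)` and `(m,m)` entries equal `cos θ`, its `(l,m)` entry equals
`e^{-iφ}·sin θ`, and its `(m,l)` entry equals `-e^{iφ}·sin θ`. -/
def planeRot (n : ℕ) (l m : Fin n) (θ φ : ℝ) : Matrix (Fin n) (Fin n) ℂ :=
  fun i j =>
    if i = l ∧ j = l then (Real.cos θ : ℂ)
    else if i = m ∧ j = m then (Real.cos θ : ℂ)
    else if i = l ∧ j = m then Complex.exp (-(φ : ℂ) * Complex.I) * (Real.sin θ : ℂ)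
    else if i = m ∧ j = l then -(Complex.exp ((φ : ℂ) * Complex.I) * (Real.sin θ : ℂ))
    else if i = j then 1 else 0

/-- `r_{l,m}(θ,φ)`: the `l`-th column of `R_{l,m}(θ,φ)`. -/
def rotCol (n : ℕ) (l m : Fin n) (θ φ : ℝ) : Fin n → ℂ :=
  fun i => planeRot n l m θ φ i l

/-- `P(A)`: the Frobenius norm of the strictly upper-triangular part of `A`. -/
def offP {n : ℕ} (A : Matrix (Fin n) (Fin n) ℂ) : ℝ :=
  Real.sqrt (∑ l, ∑ m, if l < m then ‖A l m‖ ^ 2 else 0)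

/-- The Frobenius norm of a matrix. -/
def frob {n : ℕ} (A : Matrix (Fin n) (Fin n) ℂ) : ℝ :=
  Real.sqrt (∑ i, ∑ j, ‖A i j‖ ^ 2)

/-- `B` is the result of an `η`-accurate Jacobi rotation of the Hermitian matrix `A`
at the pair `(l,m)`. -/
def JacobiStep {n : ℕ} (η : ℝ) (l m : Fin n) (A B : Matrix (Fin n) (Fin n) ℂ) : Prop :=
  ∃ θh φh ηφ ηθ : ℝ,
    |θh| ≤ π / 4 ∧ |ηφ| ≤ η ∧ |ηθ| ≤ η ∧
    φh = -Complex.arg (A l m) + ηφ ∧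
    ((A l l ≠ A m m ∧
        θh = (1 / 2) * Real.arctan (2 * ‖A l m‖ * Real.cos ηφ /
              ((A m m).re - (A l l).re)) + ηθ) ∨
      (A l l = A m m ∧ (θh = 0 ∨ θh = π / 4 ∨ θh = -(π / 4)))) ∧
    B = (planeRot n l m θh φh)ᴴ * A * planeRot n l m θh φh

/-- The pairs of one cyclic Jacobi sweep, in row (lexicographic) order
`(1,2),(1,3),…,(1,n),(2,3),…,(n−1,n)`. -/
def sweepList (n : ℕ) : List (Fin n × Fin n) :=
  (List.finRange n).flatMap fun l =>
    (List.finRange n).filterMap fun m => if l < m then some (l, m) else none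

/-- Proposition 2 of the paper: the interference power of each of the
`n_t − n_r` best precoding columns is at most `√2·P(A)`. -/
theorem interference_of_best_precoding_columns
    (nr nt : ℕ) (hrt : nr < nt)
    (H : Matrix (Fin nr) (Fin nt) ℂ) (hrank : H.rank = nr)
    (W : Matrix (Fin nt) (Fin nt) ℂ) (hW : W ∈ Matrix.unitaryGroup (Fin nt) ℂ)
    (A : Matrix (Fin nt) (Fin nt) ℂ) (hA : A = Wᴴ * (Hᴴ * H) * W)
    (e : Equiv.Perm (Fin nt))
    (hord : ∀ p q : Fin nt, p ≤ q → (A (e p) (e p)).re ≤ (A (e q) (e q)).re) :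
    ∀ q : Fin nt, (q : ℕ) < nt - nr →
      ∑ i, ‖(H.mulVec fun j => W j (e q)) i‖ ^ 2 ≤
        Real.sqrt 2 * offP A := by
  intro q hq
  classical
  set M : Matrix (Fin nr) (Fin nt) ℂ := H * W with hM
  have hMA : A = Mᴴ * M := by
    rw [hA, hM, conjTranspose_mul]
    simp [Matrix.mul_assoc]
  have hApply : ∀ i j, A i j = ∑ k, (starRingEnd ℂ) (M k i) * M k j := by
    intro i j
    rw [hMA, Matrix.mul_apply]
    simp [Matrix.conjTranspose_apply]
  have hdiag : ∀ i, (A i i).re = ∑ k, Complex.normSq (M k i) := by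
    intro i
    rw [hApply]
    have h1 : ∀ k : Fin nr, (starRingEnd ℂ) (M k i) * M k i
        = ((Complex.normSq (M k i) : ℝ) : ℂ) := fun k => by
      rw [mul_comm, Complex.mul_conj]
    simp only [h1]
    rw [Complex.re_sum]
    simp
  have hLHS : ∑ i, ‖(H.mulVec fun j => W j (e q)) i‖ ^ 2
      = (A (e q) (e q)).re := by
    rw [hdiag]
    refine Finset.sum_congr rfl fun k _ => ?_
    rw [Complex.sq_norm]
    congr 1
  rw [hLHS]
  set d : ℝ := (A (e q) (e q)).re with hd
  -- index selection
  have hqlt : ∀ p : Fin (nr+1), (q : ℕ) + (p : ℕ) < nt := fun p => by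
    have := p.isLt; omega
  set f : Fin (nr+1) → Fin nt := fun p => e ⟨(q:ℕ) + p, hqlt p⟩ with hf
  have hfinj : Function.Injective f := by
    intro a b hab
    have h1 := e.injective hab
    have h2 : (q:ℕ) + (a:ℕ) = (q:ℕ) + (b:ℕ) := by
      simpa [Fin.mk.injEq] using h1
    exact Fin.ext (by omega)
  have hfd : ∀ p : Fin (nr+1), d ≤ (A (f p) (f p)).re := by
    intro p
    refine hord q ⟨(q:ℕ) + p, hqlt p⟩ ?_
    rw [Fin.le_def]
    exact Nat.le_add_right _ _
  set N : Matrix (Fin nr) (Fin (nr+1)) ℂ := M.submatrix id f with hN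
  -- kernel vector
  have hker : ∃ v : Fin (nr+1) → ℂ, v ≠ 0 ∧ N.mulVec v = 0 := by
    by_contra hcon
    push_neg at hcon
    have hinj : Function.Injective N.mulVecLin := by
      rw [← LinearMap.ker_eq_bot, LinearMap.ker_eq_bot']
      intro v hv
      by_contra hv0
      exact hcon v hv0 (by simpa [Matrix.mulVecLin_apply] using hv)
    have hle := LinearMap.finrank_le_finrank_of_injective hinj
    simp only [Module.finrank_pi, Fintype.card_fin] at hle
    omega
  obtain ⟨v, hv0, hNv⟩ := hker
  have hNM : ∀ (k : Fin nr) (i : Fin (nr+1)), N k i = M k (f i) := fun k i => rfl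
  have hinner : ∀ i, ∑ j, A (f i) (f j) * v j = 0 := by
    intro i
    have h1 : ∑ j, A (f i) (f j) * v j
        = ∑ k, (starRingEnd ℂ) (N k i) * (N.mulVec v k) := by
      simp only [hApply, Matrix.mulVec, dotProduct, Finset.sum_mul, Finset.mul_sum,
        hNM, mul_assoc]
      exact Finset.sum_comm
    rw [h1, hNv]
    simp
  have hS : (∑ i, ∑ j, (starRingEnd ℂ) (v i) * A (f i) (f j) * v j) = 0 := by
    refine Finset.sum_eq_zero fun i _ => ?_
    have h1 : ∑ j, (starRingEnd ℂ) (v i) * A (f i) (f j) * v j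
        = (starRingEnd ℂ) (v i) * ∑ j, A (f i) (f j) * v j := by
      rw [Finset.mul_sum]
      exact Finset.sum_congr rfl fun j _ => by ring
    rw [h1, hinner i, mul_zero]
  -- real part, split diag/offdiag
  set T : Fin (nr+1) × Fin (nr+1) → ℝ :=
    fun p => ((starRingEnd ℂ) (v p.1) * A (f p.1) (f p.2) * v p.2).re with hT
  have h0 : ∑ p ∈ (univ ×ˢ univ : Finset (Fin (nr+1) × Fin (nr+1))), T p = 0 := by
    rw [Finset.sum_product]
    have h01 : ∑ x, ∑ y, T (x, y)
        = (∑ i, ∑ j, (starRingEnd ℂ) (v i) * A (f i) (f j) * v j).re := by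
      rw [Complex.re_sum]
      refine Finset.sum_congr rfl fun i _ => ?_
      rw [Complex.re_sum]
    rw [h01, hS, Complex.zero_re]
  have hsplit : ∑ p ∈ (univ : Finset (Fin (nr+1))).diag, T p
      + ∑ p ∈ (univ : Finset (Fin (nr+1))).offDiag, T p = 0 := by
    rw [← Finset.sum_union (Finset.disjoint_diag_offDiag _), Finset.diag_union_offDiag]
    exact h0
  set nv : Fin (nr+1) → ℝ := fun i => Complex.normSq (v i) with hnv
  have hdiagsum : ∑ p ∈ (univ : Finset (Fin (nr+1))).diag, T p
      = ∑ i, (A (f i) (f i)).re * nv i := by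
    rw [Finset.sum_diag]
    refine Finset.sum_congr rfl fun i _ => ?_
    have h1 : (starRingEnd ℂ) (v i) * A (f i) (f i) * v i
        = ((nv i : ℝ) : ℂ) * A (f i) (f i) := by
      rw [hnv, ← Complex.mul_conj]
      ring
    show ((starRingEnd ℂ) (v i) * A (f i) (f i) * v i).re = (A (f i) (f i)).re * nv i
    rw [h1, Complex.mul_re]
    simp [mul_comm]
  -- lower bound
  set V : ℝ := ∑ i, nv i with hV
  have hVpos : 0 < V := by
    obtain ⟨i, hi⟩ := Function.ne_iff.mp hv0
    refine Finset.sum_pos' (fun j _ => Complex.normSq_nonneg _) ⟨i, Finset.mem_univ i, ?_⟩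
    simpa [hnv] using Complex.normSq_pos.mpr hi
  have hlow : d * V ≤ ∑ i, (A (f i) (f i)).re * nv i := by
    rw [hV, Finset.mul_sum]
    exact Finset.sum_le_sum fun i _ =>
      mul_le_mul_of_nonneg_right (hfd i) (Complex.normSq_nonneg _)
  -- upper bound on off-diagonal
  have hoffabs : -∑ p ∈ (univ : Finset (Fin (nr+1))).offDiag, T p
      ≤ ∑ p ∈ (univ : Finset (Fin (nr+1))).offDiag,
          ‖A (f p.1) (f p.2)‖ * (‖v p.1‖ * ‖v p.2‖) := by
    refine (neg_le_abs _).trans ?_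
    refine (Finset.abs_sum_le_sum_abs _ _).trans ?_
    refine Finset.sum_le_sum fun p _ => ?_
    show |((starRingEnd ℂ) (v p.1) * A (f p.1) (f p.2) * v p.2).re| ≤ _
    refine (Complex.abs_re_le_norm _).trans_eq ?_
    rw [norm_mul, norm_mul, Complex.norm_conj]
    ring
  -- Cauchy-Schwarz
  have hCS : ∑ p ∈ (univ : Finset (Fin (nr+1))).offDiag,
        ‖A (f p.1) (f p.2)‖ * (‖v p.1‖ * ‖v p.2‖)
      ≤ Real.sqrt (∑ p ∈ (univ : Finset (Fin (nr+1))).offDiag,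
            ‖A (f p.1) (f p.2)‖ ^ 2)
        * Real.sqrt (∑ p ∈ (univ : Finset (Fin (nr+1))).offDiag,
            (‖v p.1‖ * ‖v p.2‖) ^ 2) :=
    Real.sum_mul_le_sqrt_mul_sqrt _ _ _
  -- bound the A part
  have hherm : ∀ l m, ‖A m l‖ = ‖A l m‖ := by
    intro l m
    have hH : A.IsHermitian := by
      rw [hMA]; exact Matrix.isHermitian_conjTranspose_mul_self M
    rw [← hH.apply l m, ← Complex.norm_conj (A m l)]
    rfl
  set S0 : ℝ := ∑ l, ∑ m, (if l < m then ‖A l m‖ ^ 2 else 0) with hS0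
  have hS0nonneg : 0 ≤ S0 := by
    refine Finset.sum_nonneg fun l _ => Finset.sum_nonneg fun m _ => ?_
    positivity
  have hApart : ∑ p ∈ (univ : Finset (Fin (nr+1))).offDiag,
      ‖A (f p.1) (f p.2)‖ ^ 2 ≤ 2 * S0 := by
    have himg : ∑ p ∈ (univ : Finset (Fin (nr+1))).offDiag,
        ‖A (f p.1) (f p.2)‖ ^ 2
        = ∑ p ∈ (univ : Finset (Fin (nr+1))).offDiag.image
            (fun p => (f p.1, f p.2)), ‖A p.1 p.2‖ ^ 2 := by
      rw [Finset.sum_image]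
      intro a _ b _ hab
      have h1 := hfinj (congrArg Prod.fst hab)
      have h2 := hfinj (congrArg Prod.snd hab)
      exact Prod.ext h1 h2
    rw [himg]
    have hsub : (univ : Finset (Fin (nr+1))).offDiag.image (fun p => (f p.1, f p.2))
        ⊆ (univ : Finset (Fin nt)).offDiag := by
      intro p hp
      obtain ⟨a, ha, rfl⟩ := Finset.mem_image.mp hp
      rw [Finset.mem_offDiag] at ha ⊢
      exact ⟨Finset.mem_univ _, Finset.mem_univ _, fun h => ha.2.2 (hfinj h)⟩
    refine (Finset.sum_le_sum_of_subset_of_nonneg hsub (fun _ _ _ => by positivity)).trans ?_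
    -- full off-diag sum equals 2 * S0
    have h2S : ∑ p ∈ (univ : Finset (Fin nt)).offDiag, ‖A p.1 p.2‖ ^ 2
        = 2 * S0 := by
      rw [show (univ : Finset (Fin nt)).offDiag = (univ ×ˢ univ).filter (fun a : Fin nt × Fin nt => a.1 ≠ a.2) from by ext p; simp [Finset.mem_offDiag], Finset.sum_filter, Finset.sum_product]
      have hpt : ∀ l m : Fin nt, (if l ≠ m then ‖A l m‖ ^ 2 else 0)
          = (if l < m then ‖A l m‖ ^ 2 else 0)
            + (if m < l then ‖A l m‖ ^ 2 else 0) := by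
        intro l m
        rcases lt_trichotomy l m with h | h | h
        · simp [h, h.ne, not_lt.mpr h.le]
        · simp [h]
        · simp [h, h.ne', not_lt.mpr h.le]
      simp only [hpt, Finset.sum_add_distrib]
      have hswap : ∑ l : Fin nt, ∑ m : Fin nt,
          (if m < l then ‖A l m‖ ^ 2 else 0) = S0 := by
        rw [Finset.sum_comm, hS0]
        refine Finset.sum_congr rfl fun l _ => Finset.sum_congr rfl fun m _ => ?_
        rw [hherm]
      rw [hswap, hS0]
      ring
    rw [h2S]
  -- bound the v part
  have hvpart : ∑ p ∈ (univ : Finset (Fin (nr+1))).offDiag,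
      (‖v p.1‖ * ‖v p.2‖) ^ 2 ≤ V ^ 2 := by
    have h1 : ∀ p : Fin (nr+1) × Fin (nr+1),
        (‖v p.1‖ * ‖v p.2‖) ^ 2 = nv p.1 * nv p.2 := by
      intro p
      rw [mul_pow, Complex.sq_norm, Complex.sq_norm]
    simp only [h1]
    have h2 : (univ : Finset (Fin (nr+1))).offDiag ⊆ univ ×ˢ univ := by
      intro p _; simp
    refine (Finset.sum_le_sum_of_subset_of_nonneg h2 (fun p _ _ =>
      mul_nonneg (Complex.normSq_nonneg _) (Complex.normSq_nonneg _))).trans_eq ?_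
    rw [Finset.sum_product, hV, sq]
    rw [Finset.sum_mul_sum]
  -- assemble
  have hchain : d * V ≤ (Real.sqrt 2 * offP A) * V := by
    have e1 : ∑ i, (A (f i) (f i)).re * nv i
        = -∑ p ∈ (univ : Finset (Fin (nr+1))).offDiag, T p := by
      rw [← hdiagsum]; linarith [hsplit]
    have h3 : Real.sqrt (∑ p ∈ (univ : Finset (Fin (nr+1))).offDiag,
        ‖A (f p.1) (f p.2)‖ ^ 2) ≤ Real.sqrt 2 * offP A := by
      refine (Real.sqrt_le_sqrt hApart).trans_eq ?_
      rw [Real.sqrt_mul (by norm_num : (0:ℝ) ≤ 2)]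
      unfold offP
      rw [hS0]
    have h4 : Real.sqrt (∑ p ∈ (univ : Finset (Fin (nr+1))).offDiag,
        (‖v p.1‖ * ‖v p.2‖) ^ 2) ≤ V := by
      refine (Real.sqrt_le_sqrt hvpart).trans_eq ?_
      exact Real.sqrt_sq hVpos.le
    calc d * V ≤ ∑ i, (A (f i) (f i)).re * nv i := hlow
      _ = -∑ p ∈ (univ : Finset (Fin (nr+1))).offDiag, T p := e1
      _ ≤ _ := hoffabs
      _ ≤ _ := hCS
      _ ≤ (Real.sqrt 2 * offP A) * V := by
          refine mul_le_mul h3 h4 (Real.sqrt_nonneg _) ?_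
          exact mul_nonneg (Real.sqrt_nonneg _) (Real.sqrt_nonneg _)
  exact le_of_mul_le_mul_right hchain hVpos

end
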